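/- Let q be a positive integer and let a₀ ∈ ℂ with |a₀| sufficiently small (|a₀| < 1 suffices for injectivity near 0 with an appropriate branch). Define v(u) := u (1 - a₀ (ū/u)^{q+1})^{1/(q+1)} for u ≠ 0 and v(0) := 0. Then v is a Lipschitz map on a neighborhood of 0 in ℂ, and if |a₀| is sufficiently small, v is a bi-Lipschitz homeomorphism onto a neighborhood of 0; moreover |v(u)| is comparable to |u|: (1-|a₀|)^{1/(q+1)} |u| ≤ |v(u)| ≤ (1+|a₀|)^{1/(q+1)} |u|. -/

import Mathlib

/-- The change of coordinates `v(u) := u (1 - a₀ (ū/u)^{q+1})^{1/(q+1)}` (principal branch),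
extended by `v(0) := 0`. -/
noncomputable def vmap (q : ℕ) (a₀ : ℂ) : ℂ → ℂ :=
  fun u => u * (1 - a₀ * ((starRingEnd ℂ) u / u) ^ (q + 1)) ^ ((1 : ℂ) / ((q : ℂ) + 1))

open Complex Metric Set

namespace Stmt15Aux

lemma cexp_eq (q : ℕ) : (1 : ℂ) / ((q : ℂ) + 1) = (((1 : ℝ) / ((q : ℝ) + 1) : ℝ) : ℂ) := by
  push_cast; ring

lemma c_pos (q : ℕ) : 0 < (1 : ℝ) / ((q : ℝ) + 1) := by positivity

lemma c_le_one (q : ℕ) : (1 : ℝ) / ((q : ℝ) + 1) ≤ 1 := by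
  rw [div_le_one (by positivity)]
  simp [Nat.cast_nonneg]

/-- norm of the unimodular factor -/
lemma conj_div_norm {u : ℂ} (hu : u ≠ 0) : ‖(starRingEnd ℂ) u / u‖ = 1 := by
  simp [norm_div, hu, div_self]

lemma wnorm_le (q : ℕ) (a₀ : ℂ) (u : ℂ) :
    ‖a₀ * ((starRingEnd ℂ) u / u) ^ (q + 1)‖ ≤ ‖a₀‖ := by
  rcases eq_or_ne u 0 with rfl | hu
  · simp
  · rw [norm_mul, norm_pow, conj_div_norm hu, one_pow, mul_one]

lemma vmap_norm (q : ℕ) (a₀ u : ℂ) :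
    ‖vmap q a₀ u‖ =
      ‖u‖ * ‖1 - a₀ * ((starRingEnd ℂ) u / u) ^ (q + 1)‖ ^ ((1:ℝ)/((q:ℝ)+1)) := by
  rw [vmap]
  rw [norm_mul, cexp_eq]
  simp only [Complex.norm_cpow_real]

/-- the key Lipschitz estimate for `z ↦ (1-z)^{1/(q+1)}` on a closed disc of radius `r < 1`. -/
lemma hlip (q : ℕ) {r : ℝ} (hr0 : 0 ≤ r) (hr1 : r < 1) {w w' : ℂ}
    (hw : ‖w‖ ≤ r) (hw' : ‖w'‖ ≤ r) :
    ‖(1 - w) ^ ((1:ℂ)/((q:ℂ)+1)) - (1 - w') ^ ((1:ℂ)/((q:ℂ)+1))‖ ≤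
      (((1:ℝ)/((q:ℝ)+1)) * (1 - r) ^ (((1:ℝ)/((q:ℝ)+1)) - 1)) * ‖w - w'‖ := by
  set c : ℝ := (1:ℝ)/((q:ℝ)+1) with hc
  have hmem : ∀ z : ℂ, z ∈ Metric.closedBall (0:ℂ) r → (1 - z) ∈ Complex.slitPlane := by
    intro z hz
    rw [Metric.mem_closedBall, dist_zero_right] at hz
    apply Complex.mem_slitPlane_iff.2
    left
    have : z.re ≤ r := le_trans (Complex.re_le_norm z) hz
    simp only [Complex.sub_re, Complex.one_re]
    linarith
  have key := Convex.norm_image_sub_le_of_norm_hasDerivWithin_le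
    (f := fun z : ℂ => (1 - z) ^ ((c:ℝ):ℂ))
    (f' := fun z : ℂ => ((c:ℝ):ℂ) * (1 - z) ^ (((c:ℝ):ℂ) - 1) * (-1))
    (s := Metric.closedBall (0:ℂ) r)
    (C := c * (1 - r) ^ (c - 1))
    (fun z hz => by
      have h1 : HasDerivAt (fun z : ℂ => 1 - z) (-1) z := by
        simpa using (hasDerivAt_id z).const_sub 1
      exact (h1.cpow_const (hmem z hz)).hasDerivWithinAt)
    (fun z hz => by
      rw [Metric.mem_closedBall, dist_zero_right] at hz
      have habs : ‖(1 - z) ^ (((c:ℝ):ℂ) - 1)‖ ≤ (1 - r) ^ (c - 1) := by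
        have hcast : ((c:ℝ):ℂ) - 1 = ((c - 1 : ℝ):ℂ) := by push_cast; ring
        rw [hcast, Complex.norm_cpow_real]
        have hlow : 1 - r ≤ ‖(1:ℂ) - z‖ := by
          have := norm_sub_norm_le (1:ℂ) z
          simp only [norm_one] at this
          calc 1 - r ≤ 1 - ‖z‖ := by linarith
            _ ≤ ‖(1:ℂ) - z‖ := this
        exact Real.rpow_le_rpow_of_nonpos (by linarith) hlow (by linarith [c_le_one q])
      calc ‖((c:ℝ):ℂ) * (1 - z) ^ (((c:ℝ):ℂ) - 1) * (-1)‖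
          = c * ‖(1 - z) ^ (((c:ℝ):ℂ) - 1)‖ := by
            rw [norm_mul, norm_mul, norm_neg, norm_one, mul_one, Complex.norm_real,
              Real.norm_of_nonneg (c_pos q).le]
        _ ≤ c * ((1 - r) ^ (c - 1)) := by
            exact mul_le_mul_of_nonneg_left habs (c_pos q).le)
    (convex_closedBall _ _)
    (by simpa [Metric.mem_closedBall, dist_zero_right] using hw')
    (by simpa [Metric.mem_closedBall, dist_zero_right] using hw)
  rw [cexp_eq, ← hc]
  exact key

lemma pow_diff_le (n : ℕ) (a b : ℂ) (ha : ‖a‖ ≤ 1) (hb : ‖b‖ ≤ 1) :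
    ‖a ^ n - b ^ n‖ ≤ n * ‖a - b‖ := by
  induction n with
  | zero => simp
  | succ n ih =>
    have key : a ^ (n+1) - b ^ (n+1) = a * (a ^ n - b ^ n) + (a - b) * b ^ n := by ring
    calc ‖a ^ (n+1) - b ^ (n+1)‖ ≤ ‖a * (a ^ n - b ^ n)‖ + ‖(a - b) * b ^ n‖ := by
          rw [key]; exact norm_add_le _ _
      _ ≤ 1 * (n * ‖a - b‖) + ‖a - b‖ * 1 := by
          rw [norm_mul, norm_mul]
          have h1 : ‖a‖ * ‖a ^ n - b ^ n‖ ≤ 1 * (n * ‖a - b‖) :=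
            mul_le_mul ha ih (norm_nonneg _) zero_le_one
          have h2 : ‖a - b‖ * ‖b ^ n‖ ≤ ‖a - b‖ * 1 := by
            apply mul_le_mul_of_nonneg_left _ (norm_nonneg _)
            calc ‖b ^ n‖ = ‖b‖ ^ n := norm_pow b n
              _ ≤ 1 ^ n := pow_le_pow_left₀ (norm_nonneg b) hb n
              _ = 1 := one_pow n
          linarith
      _ = (↑(n+1)) * ‖a - b‖ := by push_cast; ring

lemma circ_diff {u u' : ℂ} (hu : u ≠ 0) (hu' : u' ≠ 0) (hle : ‖u'‖ ≤ ‖u‖) :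
    ‖(starRingEnd ℂ) u / u - (starRingEnd ℂ) u' / u'‖ ≤ 2 * ‖u - u'‖ / ‖u‖ := by
  have key : (starRingEnd ℂ) u / u - (starRingEnd ℂ) u' / u' =
      ((starRingEnd ℂ) (u - u') * u' - (starRingEnd ℂ) u' * (u - u')) / (u * u') := by
    rw [div_sub_div _ _ hu hu', map_sub]
    ring
  rw [key, norm_div, norm_mul]
  have hnum : ‖(starRingEnd ℂ) (u - u') * u' - (starRingEnd ℂ) u' * (u - u')‖ ≤
      2 * ‖u'‖ * ‖u - u'‖ := by
    calc ‖(starRingEnd ℂ) (u - u') * u' - (starRingEnd ℂ) u' * (u - u')‖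
        ≤ ‖(starRingEnd ℂ) (u - u') * u'‖ + ‖(starRingEnd ℂ) u' * (u - u')‖ := norm_sub_le _ _
      _ = ‖u - u'‖ * ‖u'‖ + ‖u'‖ * ‖u - u'‖ := by
          rw [norm_mul, norm_mul, RCLike.norm_conj, RCLike.norm_conj]
      _ = 2 * ‖u'‖ * ‖u - u'‖ := by ring
  have hu0 : (0:ℝ) < ‖u‖ := norm_pos_iff.2 hu
  have hu'0 : (0:ℝ) < ‖u'‖ := norm_pos_iff.2 hu'
  calc ‖(starRingEnd ℂ) (u - u') * u' - (starRingEnd ℂ) u' * (u - u')‖ / (‖u‖ * ‖u'‖)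
      ≤ (2 * ‖u'‖ * ‖u - u'‖) / (‖u‖ * ‖u'‖) := by gcongr
    _ = 2 * ‖u - u'‖ / ‖u‖ := by
        have h3 : (2 * ‖u'‖ * ‖u - u'‖) / (‖u‖ * ‖u'‖) =
            2 * ‖u - u'‖ / ‖u‖ * (‖u'‖ / ‖u'‖) := by ring
        rw [h3, div_self hu'0.ne', mul_one]

lemma g_diff (q : ℕ) (a₀ : ℂ) {r : ℝ} (hr0 : 0 ≤ r) (hr1 : r < 1) (ha : ‖a₀‖ ≤ r)
    {u u' : ℂ} (hle : ‖u'‖ ≤ ‖u‖) :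
    ‖(vmap q a₀ u - u) - (vmap q a₀ u' - u')‖ ≤
      ((1 + 2 * ((q:ℝ) + 1)) * (((1:ℝ)/((q:ℝ)+1)) * (1 - r) ^ (((1:ℝ)/((q:ℝ)+1)) - 1)) * ‖a₀‖)
        * ‖u - u'‖ := by
  set c : ℝ := (1:ℝ)/((q:ℝ)+1) with hcdef
  set L : ℝ := c * (1 - r) ^ (c - 1) with hLdef
  have hL0 : 0 ≤ L := mul_nonneg (c_pos q).le (Real.rpow_nonneg (by linarith) _)
  set w : ℂ → ℂ := fun x => a₀ * ((starRingEnd ℂ) x / x) ^ (q + 1) with hwdef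
  set φ : ℂ → ℂ := fun x => (1 - w x) ^ ((1:ℂ)/((q:ℂ)+1)) with hφdef
  have hv : ∀ x : ℂ, vmap q a₀ x = x * φ x := fun x => rfl
  have hw_le : ∀ x, ‖w x‖ ≤ r := fun x => le_trans (wnorm_le q a₀ x) ha
  -- term 1
  have h1 : ‖φ u - 1‖ ≤ L * ‖a₀‖ := by
    have h0 : ‖(0:ℂ)‖ ≤ r := by simpa using hr0
    have := hlip q hr0 hr1 (hw_le u) h0
    simp only [sub_zero, Complex.one_cpow] at this
    exact le_trans this (mul_le_mul_of_nonneg_left (by exact wnorm_le q a₀ u) hL0)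
  -- term 2
  have h2 : ‖u' * (φ u - φ u')‖ ≤ 2 * ((q:ℝ) + 1) * L * ‖a₀‖ * ‖u - u'‖ := by
    rcases eq_or_ne u' 0 with rfl | hu'
    · simp only [zero_mul, norm_zero]
      have : (0:ℝ) ≤ (q:ℝ) + 1 := by positivity
      positivity
    · have hu : u ≠ 0 := by
        intro h
        exact hu' (norm_le_zero_iff.1 (by simpa [h] using hle))
      have hu0 : (0:ℝ) < ‖u‖ := norm_pos_iff.2 hu
      have hphi : ‖φ u - φ u'‖ ≤ L * ‖w u - w u'‖ :=
        hlip q hr0 hr1 (hw_le u) (hw_le u')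
      have hwdiff : ‖w u - w u'‖ ≤ ‖a₀‖ * (((q:ℝ) + 1) * (2 * ‖u - u'‖ / ‖u‖)) := by
        have hsplit : w u - w u' =
            a₀ * (((starRingEnd ℂ) u / u) ^ (q+1) - ((starRingEnd ℂ) u' / u') ^ (q+1)) := by
          simp only [hwdef]; ring
        rw [hsplit, norm_mul]
        apply mul_le_mul_of_nonneg_left _ (norm_nonneg a₀)
        calc ‖((starRingEnd ℂ) u / u) ^ (q+1) - ((starRingEnd ℂ) u' / u') ^ (q+1)‖
            ≤ ((q:ℝ) + 1) * ‖(starRingEnd ℂ) u / u - (starRingEnd ℂ) u' / u'‖ := by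
              have := pow_diff_le (q+1) ((starRingEnd ℂ) u / u) ((starRingEnd ℂ) u' / u')
                (le_of_eq (conj_div_norm hu)) (le_of_eq (conj_div_norm hu'))
              push_cast at this
              exact this
          _ ≤ ((q:ℝ) + 1) * (2 * ‖u - u'‖ / ‖u‖) := by
              apply mul_le_mul_of_nonneg_left (circ_diff hu hu' hle) (by positivity)
      have hfrac : ‖u'‖ / ‖u‖ ≤ 1 := div_le_one_of_le₀ hle (norm_nonneg u)
      calc ‖u' * (φ u - φ u')‖ = ‖u'‖ * ‖φ u - φ u'‖ := norm_mul _ _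
        _ ≤ ‖u'‖ * (L * (‖a₀‖ * (((q:ℝ) + 1) * (2 * ‖u - u'‖ / ‖u‖)))) := by
            apply mul_le_mul_of_nonneg_left _ (norm_nonneg u')
            exact le_trans hphi (mul_le_mul_of_nonneg_left hwdiff hL0)
        _ = (2 * ((q:ℝ) + 1) * L * ‖a₀‖ * ‖u - u'‖) * (‖u'‖ / ‖u‖) := by ring
        _ ≤ (2 * ((q:ℝ) + 1) * L * ‖a₀‖ * ‖u - u'‖) * 1 := by
            apply mul_le_mul_of_nonneg_left hfrac
            have : (0:ℝ) ≤ (q:ℝ) + 1 := by positivity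
            positivity
        _ = 2 * ((q:ℝ) + 1) * L * ‖a₀‖ * ‖u - u'‖ := mul_one _
  have hid : (vmap q a₀ u - u) - (vmap q a₀ u' - u') =
      (u - u') * (φ u - 1) + u' * (φ u - φ u') := by
    rw [hv u, hv u']; ring
  calc ‖(vmap q a₀ u - u) - (vmap q a₀ u' - u')‖
      ≤ ‖(u - u') * (φ u - 1)‖ + ‖u' * (φ u - φ u')‖ := by
        rw [hid]; exact norm_add_le _ _
    _ ≤ ‖u - u'‖ * (L * ‖a₀‖) + 2 * ((q:ℝ) + 1) * L * ‖a₀‖ * ‖u - u'‖ := by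
        have := mul_le_mul_of_nonneg_left h1 (norm_nonneg (u - u'))
        rw [norm_mul]
        linarith
    _ = ((1 + 2 * ((q:ℝ) + 1)) * L * ‖a₀‖) * ‖u - u'‖ := by ring

lemma g_lip (q : ℕ) (a₀ : ℂ) {r : ℝ} (hr0 : 0 ≤ r) (hr1 : r < 1) (ha : ‖a₀‖ ≤ r)
    (u u' : ℂ) :
    ‖(vmap q a₀ u - u) - (vmap q a₀ u' - u')‖ ≤
      ((1 + 2 * ((q:ℝ) + 1)) * (((1:ℝ)/((q:ℝ)+1)) * (1 - r) ^ (((1:ℝ)/((q:ℝ)+1)) - 1)) * ‖a₀‖)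
        * ‖u - u'‖ := by
  rcases le_total ‖u'‖ ‖u‖ with h | h
  · exact g_diff q a₀ hr0 hr1 ha h
  · rw [norm_sub_rev, show ‖u - u'‖ = ‖u' - u‖ from norm_sub_rev _ _]
    exact g_diff q a₀ hr0 hr1 ha h

lemma antilip_weaken {α β : Type*} [PseudoEMetricSpace α] [PseudoEMetricSpace β]
    {K K' : NNReal} {f : α → β} (h : AntilipschitzWith K f) (hK : K ≤ K') :
    AntilipschitzWith K' f := fun x y =>
  le_trans (h x y) (mul_le_mul_left (ENNReal.coe_le_coe.2 hK) _)

end Stmt15Aux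

theorem stmt_15 (q : ℕ) (hq : 0 < q) :
    (∀ a₀ : ℂ, ‖a₀‖ < 1 →
      ((∃ ε > (0:ℝ), ∃ K : NNReal, LipschitzOnWith K (vmap q a₀) (Metric.ball 0 ε)) ∧
       (∀ u : ℂ,
         (1 - ‖a₀‖) ^ ((1:ℝ) / ((q:ℝ) + 1)) * ‖u‖ ≤ ‖vmap q a₀ u‖ ∧
         ‖vmap q a₀ u‖ ≤ (1 + ‖a₀‖) ^ ((1:ℝ) / ((q:ℝ) + 1)) * ‖u‖))) ∧
    (∃ δ > (0:ℝ), ∀ a₀ : ℂ, ‖a₀‖ < δ →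
      ∃ ε > (0:ℝ), ∃ K : NNReal,
        LipschitzOnWith K (vmap q a₀) (Metric.ball 0 ε) ∧
        AntilipschitzWith K ((Metric.ball (0:ℂ) ε).restrict (vmap q a₀)) ∧
        vmap q a₀ '' Metric.ball 0 ε ∈ nhds (0:ℂ)) := by
  constructor
  · intro a₀ ha
    constructor
    · -- Lipschitz on the unit ball (indeed on all of ℂ)
      refine ⟨1, one_pos, Real.toNNReal
        ((1 + 2 * ((q:ℝ) + 1)) * (((1:ℝ)/((q:ℝ)+1)) *
          (1 - ‖a₀‖) ^ (((1:ℝ)/((q:ℝ)+1)) - 1)) * ‖a₀‖ + 1), ?_⟩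
      apply LipschitzOnWith.of_dist_le_mul
      intro x _ y _
      rw [dist_eq_norm, dist_eq_norm]
      set C : ℝ := (1 + 2 * ((q:ℝ) + 1)) * (((1:ℝ)/((q:ℝ)+1)) *
          (1 - ‖a₀‖) ^ (((1:ℝ)/((q:ℝ)+1)) - 1)) * ‖a₀‖ with hCdef
      have hg := Stmt15Aux.g_lip q a₀ (norm_nonneg a₀) ha le_rfl x y
      have hcoe : (C + 1 : ℝ) ≤ (Real.toNNReal (C + 1) : ℝ) := by
        rw [Real.coe_toNNReal']
        exact le_max_left _ _
      calc ‖vmap q a₀ x - vmap q a₀ y‖ ≤ C * ‖x - y‖ + ‖x - y‖ := by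
            have hsplit : vmap q a₀ x - vmap q a₀ y =
                ((vmap q a₀ x - x) - (vmap q a₀ y - y)) + (x - y) := by ring
            have hg' : ‖vmap q a₀ x - x - (vmap q a₀ y - y)‖ ≤ C * ‖x - y‖ := hg
            rw [hsplit]
            exact le_trans (norm_add_le _ _) (by linarith [hg'])
        _ = (C + 1) * ‖x - y‖ := by ring
        _ ≤ (Real.toNNReal (C + 1) : ℝ) * ‖x - y‖ :=
            mul_le_mul_of_nonneg_right hcoe (norm_nonneg _)
    · intro u
      rw [Stmt15Aux.vmap_norm]
      have hwle : ‖a₀ * ((starRingEnd ℂ) u / u) ^ (q + 1)‖ ≤ ‖a₀‖ := Stmt15Aux.wnorm_le q a₀ u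
      have hlow : 1 - ‖a₀‖ ≤ ‖1 - a₀ * ((starRingEnd ℂ) u / u) ^ (q + 1)‖ := by
        have := norm_sub_norm_le (1:ℂ) (a₀ * ((starRingEnd ℂ) u / u) ^ (q + 1))
        rw [norm_one] at this
        linarith
      have hhigh : ‖1 - a₀ * ((starRingEnd ℂ) u / u) ^ (q + 1)‖ ≤ 1 + ‖a₀‖ := by
        have := norm_sub_le (1:ℂ) (a₀ * ((starRingEnd ℂ) u / u) ^ (q + 1))
        rw [norm_one] at this
        linarith
      constructor
      · calc (1 - ‖a₀‖) ^ ((1:ℝ)/((q:ℝ)+1)) * ‖u‖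
            = ‖u‖ * (1 - ‖a₀‖) ^ ((1:ℝ)/((q:ℝ)+1)) := mul_comm _ _
          _ ≤ ‖u‖ * ‖1 - a₀ * ((starRingEnd ℂ) u / u) ^ (q + 1)‖ ^ ((1:ℝ)/((q:ℝ)+1)) := by
              apply mul_le_mul_of_nonneg_left _ (norm_nonneg u)
              exact Real.rpow_le_rpow (by linarith) hlow (Stmt15Aux.c_pos q).le
      · calc ‖u‖ * ‖1 - a₀ * ((starRingEnd ℂ) u / u) ^ (q + 1)‖ ^ ((1:ℝ)/((q:ℝ)+1))
            ≤ ‖u‖ * (1 + ‖a₀‖) ^ ((1:ℝ)/((q:ℝ)+1)) := by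
              apply mul_le_mul_of_nonneg_left _ (norm_nonneg u)
              exact Real.rpow_le_rpow (norm_nonneg _) hhigh (Stmt15Aux.c_pos q).le
          _ = (1 + ‖a₀‖) ^ ((1:ℝ)/((q:ℝ)+1)) * ‖u‖ := mul_comm _ _
  · -- bi-Lipschitz part
    have hB0 : (0:ℝ) < 1 + 2 * ((q:ℝ) + 1) := by positivity
    refine ⟨(2 * (1 + 2 * ((q:ℝ) + 1)))⁻¹, by positivity, ?_⟩
    intro a₀ ha
    have hq1 : (2:ℝ) ≤ (q:ℝ) + 1 := by
      have : (1:ℝ) ≤ (q:ℝ) := by exact_mod_cast hq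
      linarith
    have hc2 : (1:ℝ)/((q:ℝ)+1) ≤ 1/2 := by
      rw [div_le_div_iff₀ (by linarith) (by norm_num)]
      linarith
    have hX : (1 - (1/2:ℝ)) ^ (((1:ℝ)/((q:ℝ)+1)) - 1) ≤ 2 := by
      have h1 : ((1:ℝ) - 1/2) = 1/2 := by norm_num
      rw [h1]
      have h2 := Real.rpow_le_rpow_of_exponent_ge (by norm_num : (0:ℝ) < 1/2)
        (by norm_num : (1/2:ℝ) ≤ 1)
        (show (-1:ℝ) ≤ ((1:ℝ)/((q:ℝ)+1)) - 1 by linarith [(Stmt15Aux.c_pos q).le])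
      rw [Real.rpow_neg_one] at h2
      calc ((1:ℝ)/2) ^ (((1:ℝ)/((q:ℝ)+1)) - 1) ≤ ((1:ℝ)/2)⁻¹ := h2
        _ = 2 := by norm_num
    have hL0 : (0:ℝ) ≤ ((1:ℝ)/((q:ℝ)+1)) * (1 - (1/2:ℝ)) ^ (((1:ℝ)/((q:ℝ)+1)) - 1) :=
      mul_nonneg (Stmt15Aux.c_pos q).le (Real.rpow_nonneg (by norm_num) _)
    have hL1 : ((1:ℝ)/((q:ℝ)+1)) * (1 - (1/2:ℝ)) ^ (((1:ℝ)/((q:ℝ)+1)) - 1) ≤ 1 := by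
      calc ((1:ℝ)/((q:ℝ)+1)) * (1 - (1/2:ℝ)) ^ (((1:ℝ)/((q:ℝ)+1)) - 1)
          ≤ (1/2) * 2 := mul_le_mul hc2 hX (Real.rpow_nonneg (by norm_num) _) (by norm_num)
        _ = 1 := by norm_num
    have hδhalf : (2 * (1 + 2 * ((q:ℝ) + 1)))⁻¹ ≤ 1/2 := by
      rw [show (1/2:ℝ) = (2:ℝ)⁻¹ by norm_num]
      apply inv_anti₀ (by norm_num)
      nlinarith
    have ha2 : ‖a₀‖ ≤ (1/2:ℝ) := le_trans ha.le hδhalf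
    have hCle : (1 + 2 * ((q:ℝ) + 1)) * (((1:ℝ)/((q:ℝ)+1)) *
        (1 - (1/2:ℝ)) ^ (((1:ℝ)/((q:ℝ)+1)) - 1)) * ‖a₀‖ ≤ 1/2 := by
      calc (1 + 2 * ((q:ℝ) + 1)) * (((1:ℝ)/((q:ℝ)+1)) *
            (1 - (1/2:ℝ)) ^ (((1:ℝ)/((q:ℝ)+1)) - 1)) * ‖a₀‖
          ≤ (1 + 2 * ((q:ℝ) + 1)) * 1 * (2 * (1 + 2 * ((q:ℝ) + 1)))⁻¹ := by
            apply mul_le_mul _ ha.le (norm_nonneg _) (by positivity)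
            exact mul_le_mul le_rfl hL1 hL0 hB0.le
        _ = 1/2 := by
            rw [mul_one]
            field_simp
    -- the approximation by the identity
    have happrox : ApproximatesLinearOn (vmap q a₀)
        ((ContinuousLinearEquiv.refl ℂ ℂ : ℂ ≃L[ℂ] ℂ) : ℂ →L[ℂ] ℂ)
        (Metric.ball 0 1) (1/2 : NNReal) := by
      intro x _ y _
      have hg := Stmt15Aux.g_lip q a₀ (by norm_num : (0:ℝ) ≤ 1/2) (by norm_num : (1/2:ℝ) < 1)
        ha2 x y
      have hrw : vmap q a₀ x - vmap q a₀ y -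
          ((ContinuousLinearEquiv.refl ℂ ℂ : ℂ ≃L[ℂ] ℂ) : ℂ →L[ℂ] ℂ) (x - y) =
          (vmap q a₀ x - x) - (vmap q a₀ y - y) := by
        simp only [ContinuousLinearEquiv.coe_coe, ContinuousLinearEquiv.refl_apply]
        ring
      rw [hrw]
      refine le_trans hg ?_
      apply mul_le_mul_of_nonneg_right _ (norm_nonneg _)
      have hhalf : ((1/2 : NNReal) : ℝ) = 1/2 := by norm_num
      rw [hhalf]
      exact hCle
    have hN : ‖(((ContinuousLinearEquiv.refl ℂ ℂ)).symm : ℂ →L[ℂ] ℂ)‖₊ = 1 := by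
      simp
    have hcN : Subsingleton ℂ ∨
        (1/2 : NNReal) < ‖(((ContinuousLinearEquiv.refl ℂ ℂ)).symm : ℂ →L[ℂ] ℂ)‖₊⁻¹ := by
      right
      rw [hN, inv_one]
      have h12 : ((1/2 : NNReal) : ℝ) < ((1 : NNReal) : ℝ) := by norm_num
      exact_mod_cast h12
    set A : NNReal := (‖(((ContinuousLinearEquiv.refl ℂ ℂ)).symm : ℂ →L[ℂ] ℂ)‖₊⁻¹ -
      (1/2 : NNReal))⁻¹ with hA
    refine ⟨1, one_pos, 2 ⊔ A, ?_, ?_, ?_⟩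
    · apply LipschitzOnWith.of_dist_le_mul
      intro x _ y _
      rw [dist_eq_norm, dist_eq_norm]
      have hg := Stmt15Aux.g_lip q a₀ (by norm_num : (0:ℝ) ≤ 1/2) (by norm_num : (1/2:ℝ) < 1)
        ha2 x y
      have hgC : ‖(vmap q a₀ x - x) - (vmap q a₀ y - y)‖ ≤ (1/2) * ‖x - y‖ :=
        le_trans hg (mul_le_mul_of_nonneg_right hCle (norm_nonneg _))
      have hK2 : (2:ℝ) ≤ ((2 ⊔ A : NNReal) : ℝ) := by
        have : (2:NNReal) ≤ 2 ⊔ A := le_sup_left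
        exact_mod_cast this
      calc ‖vmap q a₀ x - vmap q a₀ y‖ ≤ (1/2) * ‖x - y‖ + ‖x - y‖ := by
            have hsplit : vmap q a₀ x - vmap q a₀ y =
                ((vmap q a₀ x - x) - (vmap q a₀ y - y)) + (x - y) := by ring
            rw [hsplit]
            exact le_trans (norm_add_le _ _) (by linarith)
        _ ≤ 2 * ‖x - y‖ := by
            have := norm_nonneg (x - y)
            linarith
        _ ≤ ((2 ⊔ A : NNReal) : ℝ) * ‖x - y‖ :=
            mul_le_mul_of_nonneg_right hK2 (norm_nonneg _)
    · exact Stmt15Aux.antilip_weaken (happrox.antilipschitz hcN) le_sup_right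
    · have hopen : IsOpen (vmap q a₀ '' Metric.ball 0 1) := by
        have h := (happrox.toOpenPartialHomeomorph (vmap q a₀) (Metric.ball 0 1) hcN
          Metric.isOpen_ball).open_target
        rwa [ApproximatesLinearOn.toOpenPartialHomeomorph_target] at h
      apply hopen.mem_nhds
      exact ⟨0, by simp [Metric.mem_ball], by simp [vmap]⟩
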